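/- Let S be the set {0} ∪ {(k + a/k, -a/k, -k) : k ∈ Z_{>0}} in H ⊂ R^3 for a fixed real a > 0. Then S is a discrete subset of H, and the Voronoi region VR_S(0) = {x ∈ H : x_1 ≤ max(x_2 + a/k, x_3 + k) for all k ∈ Z_{>0}} is not equal to any finite intersection of the halfspaces {x ∈ H : x_1 ≤ max(x_2 + a/k, x_3 + k)}; none of these countably many inequalities is redundant. -/
import Mathlib

noncomputable def tmin {n : ℕ} [NeZero n] (f : Fin n → ℝ) : ℝ :=
  Finset.univ.inf' Finset.univ_nonempty f

noncomputable def dtri {n : ℕ} [NeZero n] (a b : Fin n → ℝ) : ℝ :=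
  (∑ i, (b i - a i)) - n * tmin (fun i => b i - a i)

lemma tmin3 (f : Fin 3 → ℝ) : tmin f = min (f 0) (min (f 1) (f 2)) := by
  simp [tmin, show (Finset.univ : Finset (Fin 3)) = {0,1,2} from rfl, Finset.inf'_insert]

lemma key (a : ℝ) (ha : 0 < a) (k : ℕ) (hk : 0 < k) (x : Fin 3 → ℝ) (hx : ∑ i, x i = 0) :
    dtri x 0 ≤ dtri x ![(k : ℝ) + a / k, -(a / k), -(k : ℝ)] ↔
      x 0 ≤ max (x 1 + a / k) (x 2 + (k : ℝ)) := by
  have hk1 : (1:ℝ) ≤ (k:ℝ) := by exact_mod_cast hk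
  have hak : 0 < a / k := div_pos ha (by linarith)
  have hx3 : x 0 + x 1 + x 2 = 0 := by simpa [Fin.sum_univ_three] using hx
  simp only [dtri, tmin3, Fin.sum_univ_three, Pi.zero_apply, Matrix.cons_val_zero,
    Matrix.cons_val_one, Matrix.head_cons, Matrix.cons_val_two, Matrix.tail_cons]
  push_cast
  set c := a / (k:ℝ) with hc
  set M0 := (0 - x 0) ⊓ ((0 - x 1) ⊓ (0 - x 2)) with hM0
  set M1 := ((k:ℝ) + c - x 0) ⊓ ((-c - x 1) ⊓ (-(k:ℝ) - x 2)) with hM1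
  constructor
  · intro h
    have hM : M1 ≤ M0 := by linarith
    have h1 : M1 ≤ 0 - x 0 := le_trans hM (min_le_left _ _)
    rcases min_le_iff.mp h1 with h2 | h2
    · exfalso; linarith
    · rcases min_le_iff.mp h2 with h3 | h3
      · exact le_max_of_le_left (by linarith)
      · exact le_max_of_le_right (by linarith)
  · intro h
    have e2 : M1 ≤ -c - x 1 := le_trans (min_le_right _ _) (min_le_left _ _)
    have e3 : M1 ≤ -(k:ℝ) - x 2 := le_trans (min_le_right _ _) (min_le_right _ _)
    have hM : M1 ≤ M0 := by
      refine le_min ?_ (le_min (by linarith) (by linarith))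
      rcases le_max_iff.mp h with h' | h'
      · linarith
      · linarith
    linarith

lemma frac (a M K : ℝ) (ha : 0 < a) (hM : 1 ≤ M) (hMK : M + 1 ≤ K) :
    a / K + a / (K * (K + 1)) ≤ a / M := by
  have hK : (0:ℝ) < K := by linarith
  have hM0 : (0:ℝ) < M := by linarith
  rw [div_add_div _ _ (by positivity) (by positivity), div_le_div_iff₀ (by positivity) hM0]
  nlinarith [mul_le_mul_of_nonneg_left hMK (le_of_lt ha), mul_pos hK hM0,
    mul_le_mul_of_nonneg_left hMK (mul_nonneg ha.le hK.le)]

-- witness for non-redundancy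
lemma witness (a : ℝ) (ha : 0 < a) (k : ℕ) (hk : 0 < k) :
    ∃ x : Fin 3 → ℝ, (∑ i, x i = 0) ∧
      (∀ m : ℕ, 0 < m → m ≠ k → x 0 ≤ max (x 1 + a / m) (x 2 + m)) ∧
      ¬ (x 0 ≤ max (x 1 + a / k) (x 2 + k)) := by
  have hk1 : (1:ℝ) ≤ (k:ℝ) := by exact_mod_cast hk
  have hkpos : (0:ℝ) < (k:ℝ) := by linarith
  set δ : ℝ := a / ((k:ℝ) * ((k:ℝ) + 1)) with hδ
  have hδpos : 0 < δ := by positivity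
  set x0 : ℝ := (a / k + δ + (k:ℝ) + 1) / 3 with hx0
  refine ⟨![x0, x0 - a / k - δ, x0 - k - 1], ?_, ?_, ?_⟩
  · simp [Fin.sum_univ_three]; ring
  · intro m hm hmk
    have hm1 : (1:ℝ) ≤ (m:ℝ) := by exact_mod_cast hm
    simp only [Matrix.cons_val_zero, Matrix.cons_val_one, Matrix.head_cons,
      Matrix.cons_val_two, Matrix.tail_cons]
    rcases lt_or_gt_of_ne hmk with hlt | hgt
    · -- m < k : use first component
      have hmk' : (m:ℝ) + 1 ≤ (k:ℝ) := by exact_mod_cast Nat.succ_le_of_lt hlt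
      have := frac a (m:ℝ) (k:ℝ) ha hm1 hmk'
      exact le_max_of_le_left (by rw [hδ] at *; linarith)
    · -- m > k : use second component
      have hmk' : (k:ℝ) + 1 ≤ (m:ℝ) := by exact_mod_cast Nat.succ_le_of_lt hgt
      exact le_max_of_le_right (by linarith)
  · simp only [Matrix.cons_val_zero, Matrix.cons_val_one, Matrix.head_cons,
      Matrix.cons_val_two, Matrix.tail_cons, not_le]
    exact max_lt (by linarith) (by linarith)

lemma sep (a : ℝ) (ha : 0 < a)
    (s t : Fin 3 → ℝ)
    (hs : s ∈ ({0} ∪ {p | ∃ k : ℕ, 0 < k ∧ p = ![(k : ℝ) + a / k, -(a / k), -(k : ℝ)]} : Set (Fin 3 → ℝ)))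
    (ht : t ∈ ({0} ∪ {p | ∃ k : ℕ, 0 < k ∧ p = ![(k : ℝ) + a / k, -(a / k), -(k : ℝ)]} : Set (Fin 3 → ℝ)))
    (hne : s ≠ t) : 1 ≤ dist s t := by
  have coord : ∀ i : Fin 3, dist (s i) (t i) ≤ dist s t := fun i => dist_le_pi_dist s t i
  rcases hs with rfl | ⟨k, hk, rfl⟩ <;> rcases ht with rfl | ⟨m, hm, rfl⟩
  · exact absurd rfl hne
  · have hm1 : (1:ℝ) ≤ (m:ℝ) := by exact_mod_cast hm
    have ham : 0 < a / m := div_pos ha (by linarith)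
    refine le_trans ?_ (coord 0)
    simp only [Pi.zero_apply, Matrix.cons_val_zero, Real.dist_eq]
    rw [abs_sub_comm, abs_of_nonneg (by linarith)]
    linarith
  · have hk1 : (1:ℝ) ≤ (k:ℝ) := by exact_mod_cast hk
    have hak : 0 < a / k := div_pos ha (by linarith)
    refine le_trans ?_ (coord 0)
    simp only [Pi.zero_apply, Matrix.cons_val_zero, Real.dist_eq]
    rw [abs_of_nonneg (by linarith)]
    linarith
  · have hkm : k ≠ m := by rintro rfl; exact hne rfl
    refine le_trans ?_ (coord 2)
    simp only [Matrix.cons_val_two, Matrix.tail_cons, Matrix.head_cons, Real.dist_eq]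
    rw [show -(k:ℝ) - -(m:ℝ) = (m:ℝ) - (k:ℝ) by ring]
    rcases lt_or_gt_of_ne hkm with h | h
    · have : (k:ℝ) + 1 ≤ (m:ℝ) := by exact_mod_cast Nat.succ_le_of_lt h
      exact le_abs.mpr (Or.inl (by linarith))
    · have : (m:ℝ) + 1 ≤ (k:ℝ) := by exact_mod_cast Nat.succ_le_of_lt h
      exact le_abs.mpr (Or.inr (by linarith))

lemma noacc (a : ℝ) (ha : 0 < a) (x : Fin 3 → ℝ) :
    ¬ AccPt x (Filter.principal
      ({0} ∪ {p | ∃ k : ℕ, 0 < k ∧ p = ![(k : ℝ) + a / k, -(a / k), -(k : ℝ)]} : Set (Fin 3 → ℝ))) := by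
  intro hAcc
  rw [accPt_iff_nhds] at hAcc
  obtain ⟨y, ⟨hy1, hy2⟩, hyx⟩ := hAcc _ (Metric.ball_mem_nhds x (by norm_num : (0:ℝ) < 1/4))
  have hyd : 0 < dist y x := dist_pos.mpr hyx
  obtain ⟨z, ⟨hz1, hz2⟩, hzx⟩ := hAcc _ (Metric.ball_mem_nhds x hyd)
  rw [Metric.mem_ball] at hy1 hz1
  have hzy : z ≠ y := by
    rintro rfl; exact absurd hz1 (lt_irrefl _)
  have h1 := sep a ha z y hz2 hy2 hzy
  have h2 : dist z y ≤ dist z x + dist x y := dist_triangle z x y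
  rw [dist_comm x y] at h2
  linarith

theorem stmt17 (a : ℝ) (ha : 0 < a) :
    -- the set of sites
    letI S : Set (Fin 3 → ℝ) :=
      {0} ∪ {p | ∃ k : ℕ, 0 < k ∧ p = ![(k : ℝ) + a / k, -(a / k), -(k : ℝ)]}
    -- S is a discrete subset of H
    (∀ x : Fin 3 → ℝ, (∑ i, x i = 0) → ¬ AccPt x (Filter.principal S)) ∧
    -- the Voronoi region of 0 is cut out by the countably many inequalities
    ({x : Fin 3 → ℝ | (∑ i, x i = 0) ∧ ∀ s ∈ S, dtri x 0 ≤ dtri x s} =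
      {x : Fin 3 → ℝ | (∑ i, x i = 0) ∧
        ∀ k : ℕ, 0 < k → x 0 ≤ max (x 1 + a / k) (x 2 + k)}) ∧
    -- none of the inequalities is redundant
    (∀ k : ℕ, 0 < k → ∃ x : Fin 3 → ℝ, (∑ i, x i = 0) ∧
      (∀ m : ℕ, 0 < m → m ≠ k → x 0 ≤ max (x 1 + a / m) (x 2 + m)) ∧
      ¬ (x 0 ≤ max (x 1 + a / k) (x 2 + k))) ∧
    -- the region is no finite intersection of the halfspaces
    (∀ T : Finset ℕ,
      {x : Fin 3 → ℝ | (∑ i, x i = 0) ∧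
          ∀ k ∈ T, 0 < k → x 0 ≤ max (x 1 + a / k) (x 2 + k)} ≠
        {x : Fin 3 → ℝ | (∑ i, x i = 0) ∧
          ∀ k : ℕ, 0 < k → x 0 ≤ max (x 1 + a / k) (x 2 + k)}) := by
  refine ⟨fun x _ => noacc a ha x, ?_, witness a ha, ?_⟩
  · -- set equality
    ext x
    simp only [Set.mem_setOf_eq]
    constructor
    · rintro ⟨hx, h⟩
      exact ⟨hx, fun k hk => (key a ha k hk x hx).mp (h _ (Or.inr ⟨k, hk, rfl⟩))⟩
    · rintro ⟨hx, h⟩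
      refine ⟨hx, ?_⟩
      rintro s (rfl | ⟨k, hk, rfl⟩)
      · exact le_refl _
      · exact (key a ha k hk x hx).mpr (h k hk)
  · -- no finite intersection
    intro T heq
    set k := T.sup id + 1 with hkdef
    obtain ⟨x, hsum, hall, hviol⟩ := witness a ha k (Nat.succ_pos _)
    have hxL : x ∈ {x : Fin 3 → ℝ | (∑ i, x i = 0) ∧
        ∀ m ∈ T, 0 < m → x 0 ≤ max (x 1 + a / m) (x 2 + m)} := by
      refine ⟨hsum, fun m hmT hm => hall m hm ?_⟩
      have : m ≤ T.sup id := Finset.le_sup (f := id) hmT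
      omega
    rw [heq] at hxL
    exact hviol (hxL.2 k (Nat.succ_pos _))
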